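/- Let G be a finite abelian group acting on an abelian group A (written multiplicatively), M ≥ 1 an integer, G = Π_{i=1}^r G_i with each G_i cyclic of order M generated by σ_i, and g ∈ A. Define N_i = Σ_{τ∈G_i} τ and D_i = Σ_{j=1}^{M-1} j σ_i^j in ℤ[G]. Suppose for each i there exists an element g_i ∈ A^{G_i} (fixed by G_i) and φ_i ∈ ℤ[G] acting trivially modulo the relevant quotient such that N_i g = (1 - φ_i) g_i with φ_i g_i defined and all elements of A^G become M-th powers appropriately. Then for r = 1: (1 - σ₁)·D₁·g ≡ -(1 - φ₁)g₁ (mod A^M), and if g₁ is fixed by the whole group and φ₁ acts trivially on g₁, then (1-σ₁)D₁g ∈ A^M. More generally, by induction, (1-σ)·(Π_i D_i)·g ∈ A^M for every σ ∈ G, i.e., the class of (Π_i D_i)·g in A/A^M is G-invariant. -/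
import Mathlib


/-- The norm operator `N_i a = ∏_{j=0}^{M-1} σ_i^j • a`. -/
def Nop {G A : Type*} [Group G] [CommGroup A] [MulDistribMulAction G A]
    (σ : G) (M : ℕ) (a : A) : A :=
  ∏ j ∈ Finset.range M, (σ ^ j) • a

/-- Kolyvagin's derivative operator `D_i a = ∏_{j=1}^{M-1} (σ_i^j • a)^j`. -/
def Dop {G A : Type*} [Group G] [CommGroup A] [MulDistribMulAction G A]
    (σ : G) (M : ℕ) (a : A) : A :=
  ∏ j ∈ Finset.range M, ((σ ^ j) • a) ^ j

/-- The composite derivative operator `D_S = ∏_{i ∈ S} D_i`. -/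
noncomputable def DFull {G A : Type*} [Group G] [CommGroup A] [MulDistribMulAction G A] {r : ℕ}
    (σ : Fin r → G) (M : ℕ) (S : Finset (Fin r)) (a : A) : A :=
  S.toList.foldr (fun i b => Dop (σ i) M b) a

section Aux

variable {G A : Type*} [CommGroup G] [CommGroup A] [MulDistribMulAction G A]

lemma Dop_mul (σ : G) (M : ℕ) (a b : A) :
    Dop σ M (a * b) = Dop σ M a * Dop σ M b := by
  simp [Dop, smul_mul', mul_pow, Finset.prod_mul_distrib]

lemma Dop_one (σ : G) (M : ℕ) : Dop σ M (1 : A) = 1 := by simp [Dop]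

/-- `Dop σ M` as a monoid hom. -/
def DopHom (σ : G) (M : ℕ) : A →* A :=
  { toFun := Dop σ M, map_one' := Dop_one σ M, map_mul' := Dop_mul σ M }

lemma Nop_mul (σ : G) (M : ℕ) (a b : A) :
    Nop σ M (a * b) = Nop σ M a * Nop σ M b := by
  simp [Nop, smul_mul', Finset.prod_mul_distrib]

lemma Nop_one (σ : G) (M : ℕ) : Nop σ M (1 : A) = 1 := by simp [Nop]

/-- `Nop σ M` as a monoid hom. -/
def NopHom (σ : G) (M : ℕ) : A →* A :=
  { toFun := Nop σ M, map_one' := Nop_one σ M, map_mul' := Nop_mul σ M }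

lemma smul_prodA {ι : Type*} (τ : G) (s : Finset ι) (f : ι → A) :
    τ • ∏ i ∈ s, f i = ∏ i ∈ s, τ • f i :=
  map_prod (MulDistribMulAction.toMonoidHom A τ) f s

lemma smul_commA (x y : G) (c : A) : x • y • c = y • x • c := by
  rw [smul_smul, smul_smul, mul_comm]

lemma Dop_prod {ι : Type*} (σ : G) (M : ℕ) (s : Finset ι) (f : ι → A) :
    Dop σ M (∏ i ∈ s, f i) = ∏ i ∈ s, Dop σ M (f i) :=
  map_prod (DopHom σ M) f s

lemma Nop_prod {ι : Type*} (σ : G) (M : ℕ) (s : Finset ι) (f : ι → A) :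
    Nop σ M (∏ i ∈ s, f i) = ∏ i ∈ s, Nop σ M (f i) :=
  map_prod (NopHom σ M) f s

lemma Dop_smul (σ τ : G) (M : ℕ) (a : A) :
    Dop σ M (τ • a) = τ • Dop σ M a := by
  rw [Dop, Dop, smul_prodA]
  exact Finset.prod_congr rfl fun j _ => by rw [smul_pow', smul_commA]

lemma Nop_smul (σ τ : G) (M : ℕ) (a : A) :
    Nop σ M (τ • a) = τ • Nop σ M a := by
  rw [Nop, Nop, smul_prodA]
  exact Finset.prod_congr rfl fun j _ => (smul_commA _ _ _).symm

lemma Dop_div (σ : G) (M : ℕ) (a b : A) :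
    Dop σ M (a / b) = Dop σ M a / Dop σ M b :=
  map_div (DopHom σ M) a b

lemma Dop_pow (σ : G) (M : ℕ) (a : A) (n : ℕ) :
    Dop σ M (a ^ n) = (Dop σ M a) ^ n :=
  map_pow (DopHom σ M) a n

lemma Nop_pow (σ : G) (M : ℕ) (a : A) (n : ℕ) :
    Nop σ M (a ^ n) = (Nop σ M a) ^ n :=
  map_pow (NopHom σ M) a n

lemma Dop_Dop (σ σ' : G) (M : ℕ) (a : A) :
    Dop σ M (Dop σ' M a) = Dop σ' M (Dop σ M a) := by
  have : Dop σ M (Dop σ' M a) = ∏ k ∈ Finset.range M, ((σ' ^ k) • Dop σ M a) ^ k := by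
    rw [show Dop σ' M a = ∏ k ∈ Finset.range M, ((σ' ^ k) • a) ^ k from rfl, Dop_prod]
    exact Finset.prod_congr rfl fun k _ => by rw [Dop_pow, Dop_smul]
  rw [this]; rfl

lemma Nop_Dop (σ σ' : G) (M : ℕ) (a : A) :
    Nop σ M (Dop σ' M a) = Dop σ' M (Nop σ M a) := by
  have : Nop σ M (Dop σ' M a) = ∏ k ∈ Finset.range M, ((σ' ^ k) • Nop σ M a) ^ k := by
    rw [show Dop σ' M a = ∏ k ∈ Finset.range M, ((σ' ^ k) • a) ^ k from rfl, Nop_prod]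
    exact Finset.prod_congr rfl fun k _ => by rw [Nop_pow, Nop_smul]
  rw [this]; rfl

/-- Key identity: `(σ - 1)·D = M - N` in multiplicative notation, assuming `σ^M = 1`. -/
lemma Dop_key (σ : G) (M : ℕ) (hσ : σ ^ M = 1) (a : A) :
    σ • Dop σ M a / Dop σ M a = a ^ M / Nop σ M a := by
  have h1 : σ • Dop σ M a = ∏ j ∈ Finset.range M, ((σ ^ (j + 1)) • a) ^ j := by
    rw [Dop, smul_prodA]
    refine Finset.prod_congr rfl fun j _ => ?_
    rw [smul_pow', smul_commA, smul_smul, ← pow_succ]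
  have h2 : ∏ j ∈ Finset.range M, ((σ ^ (j + 1)) • a) ^ j =
      (∏ j ∈ Finset.range M, ((σ ^ (j + 1)) • a) ^ (j + 1)) /
        ∏ j ∈ Finset.range M, (σ ^ (j + 1)) • a := by
    rw [← Finset.prod_div_distrib]
    have hxx : ∀ (x : A) (n : ℕ), x ^ n = x ^ (n + 1) / x := fun x n => by
      rw [pow_succ, mul_div_cancel_right]
    exact Finset.prod_congr rfl fun j _ => hxx _ j
  have h3 : ∏ j ∈ Finset.range M, ((σ ^ (j + 1)) • a) ^ (j + 1) = Dop σ M a * a ^ M := by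
    have := Finset.prod_range_succ' (fun k => ((σ ^ k) • a) ^ k) M
    rw [Finset.prod_range_succ] at this
    simp only [pow_zero, one_smul, pow_one, mul_one, hσ] at this
    rw [← this]; rfl
  have h4 : ∏ j ∈ Finset.range M, (σ ^ (j + 1)) • a = Nop σ M a := by
    have := Finset.prod_range_succ' (fun k => (σ ^ k) • a) M
    rw [Finset.prod_range_succ] at this
    simp only [pow_zero, one_smul, hσ] at this
    exact mul_right_cancel this.symm
  rw [h1, h2, h3, h4, div_right_comm, mul_div_cancel_left]

variable {r : ℕ} (σ : Fin r → G) (M : ℕ)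

lemma DFull_smul (τ : G) (S : Finset (Fin r)) (a : A) :
    τ • DFull σ M S a = DFull σ M S (τ • a) := by
  rw [DFull, DFull]
  induction S.toList with
  | nil => rfl
  | cons i l ih => simp only [List.foldr_cons, ← Dop_smul, ih]

lemma DFull_div (S : Finset (Fin r)) (a b : A) :
    DFull σ M S (a / b) = DFull σ M S a / DFull σ M S b := by
  rw [DFull, DFull, DFull]
  induction S.toList with
  | nil => rfl
  | cons i l ih => simp only [List.foldr_cons, ih, Dop_div]

lemma Nop_DFull (s : G) (S : Finset (Fin r)) (a : A) :
    Nop s M (DFull σ M S a) = DFull σ M S (Nop s M a) := by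
  rw [DFull, DFull]
  induction S.toList with
  | nil => rfl
  | cons i l ih => simp only [List.foldr_cons, Nop_Dop, ih]

lemma DFull_insert {j : Fin r} {T : Finset (Fin r)} (hj : j ∉ T) (a : A) :
    DFull σ M (insert j T) a = Dop (σ j) M (DFull σ M T a) := by
  have lcomm : LeftCommutative (fun (i : Fin r) (b : A) => Dop (σ i) M b) :=
    ⟨fun i i' b => Dop_Dop (σ i) (σ i') M b⟩
  have perm := Finset.toList_insert hj
  rw [DFull, @List.Perm.foldr_eq _ _ _ _ _ lcomm perm a]
  rfl

end Aux

/-- Abstract Kolyvagin derivative lemma: `G ≅ (ℤ/M)^r` acts on the abelian group `A` via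
the generators `σ i`, and `g S` (for `S ⊆ {1,…,r}`) is an Euler system, i.e. `g S` is
fixed by the `σ i` with `i ∉ S` and satisfies the norm relations
`N_i (g S) = (1 - Frob_i)·g (S∖{i})`.  Then for the full derivative `D = ∏_i D_i`,
the element `(1 - σ)·D·g` is an `M`-th power for every `σ ∈ G`; that is, the class of
`D·(g {1,…,r})` in `A/A^M` is `G`-invariant. -/
theorem stmt16 {G A : Type*} [CommGroup G] [CommGroup A] [MulDistribMulAction G A]
    (M r : ℕ) (hM : 1 ≤ M) (σ Frob : Fin r → G)
    (hord : ∀ i, orderOf (σ i) = M)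
    (hgen : Subgroup.closure (Set.range σ) = (⊤ : Subgroup G))
    (g : Finset (Fin r) → A)
    (hfix : ∀ (S : Finset (Fin r)) (i : Fin r), i ∉ S → σ i • g S = g S)
    (hrel : ∀ (S : Finset (Fin r)) (i : Fin r), i ∈ S →
      Nop (σ i) M (g S) = g (S.erase i) / (Frob i • g (S.erase i))) :
    ∀ τ : G, ∃ a : A,
      (τ • DFull σ M Finset.univ (g Finset.univ)) /
          DFull σ M Finset.univ (g Finset.univ) = a ^ M := by
  have aux : ∀ S : Finset (Fin r), ∀ τ : G, ∃ a : A,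
      τ • DFull σ M S (g S) / DFull σ M S (g S) = a ^ M := by
    intro S
    induction S using Finset.strongInduction with
    | _ S IH =>
      set y := DFull σ M S (g S) with hy
      -- the set of τ with (τ-1)y ∈ A^M is closed under the group operations
      have hone : ∃ a : A, (1 : G) • y / y = a ^ M := ⟨1, by simp⟩
      have hmul : ∀ x x' : G, (∃ a : A, x • y / y = a ^ M) → (∃ a : A, x' • y / y = a ^ M) →
          ∃ a : A, (x * x') • y / y = a ^ M := by
        rintro x x' ⟨a, ha⟩ ⟨b, hb⟩
        refine ⟨x • b * a, ?_⟩
        have : (x * x') • y / y = x • (x' • y / y) * (x • y / y) := by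
          rw [mul_smul, smul_div', div_mul_div_cancel]
        rw [this, hb, ha, smul_pow', mul_pow]
      have hinv : ∀ x : G, (∃ a : A, x • y / y = a ^ M) →
          ∃ a : A, x⁻¹ • y / y = a ^ M := by
        rintro x ⟨a, ha⟩
        refine ⟨(x⁻¹ • a)⁻¹, ?_⟩
        have : x⁻¹ • y / y = x⁻¹ • (y / x • y) := by
          rw [smul_div', inv_smul_smul]
        rw [this, ← inv_div, ha, ← inv_pow, smul_pow', smul_inv']
      -- it contains the generators
      have hgenmem : ∀ j : Fin r, ∃ a : A, σ j • y / y = a ^ M := by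
        intro j
        by_cases hj : j ∈ S
        · -- the main case
          set S' := S.erase j with hS'
          have hSins : S = insert j S' := (Finset.insert_erase hj).symm
          have hx : y = Dop (σ j) M (DFull σ M S' (g S)) := by
            rw [hy, hSins, DFull_insert σ M (Finset.notMem_erase j S)]
          set x := DFull σ M S' (g S) with hxdef
          have hσM : (σ j) ^ M = 1 := by rw [← hord j]; exact pow_orderOf_eq_one _
          have hk : σ j • y / y = x ^ M / Nop (σ j) M x := by
            rw [hx]; exact Dop_key (σ j) M hσM x
          set z := DFull σ M S' (g S') with hz
          have hN : Nop (σ j) M x = z / Frob j • z := by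
            rw [hxdef, Nop_DFull, hrel S j hj, DFull_div, hz, DFull_smul]
          obtain ⟨b, hb⟩ := IH S' (Finset.erase_ssubset hj) (Frob j)
          refine ⟨x * b, ?_⟩
          have hzb : z / Frob j • z = (b ^ M)⁻¹ := by rw [← hb, inv_div]
          rw [hk, hN, hzb, div_inv_eq_mul, mul_pow]
        · -- σ j acts trivially
          refine ⟨1, ?_⟩
          rw [hy, DFull_smul, hfix S j hj]
          simp
      intro τ
      have hτ : τ ∈ Subgroup.closure (Set.range σ) := by rw [hgen]; trivial
      exact Subgroup.closure_induction
        (fun x hx => by obtain ⟨j, rfl⟩ := hx; exact hgenmem j)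
        hone
        (fun x x' _ _ hx hx' => hmul x x' hx hx')
        (fun x _ hx => hinv x hx) hτ
  exact aux Finset.univ
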